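/- arXiv:2503.17466 — 2 statements merged into one kernel-verified Lean document; each statement's English description precedes it below -/
import Mathlib

section
/- Let n ≥ 1, m ∈ ℝ, r ≥ 0, and let p : ℤⁿ → ℂ be a symbol of order m. Then the conjunction [p(D) is GS-s for every s > r, and p(D) is not GS-s for any s with 0 ≤ s < r] holds if and only if the following two conditions hold: (i) for every ε > 0 there exists K_ε > 0 such that |p(ξ)| ≥ K_ε·|ξ|^(m−(r+ε)) for all ξ ∈ ℤⁿ \ {0} with p(ξ) ≠ 0; (ii) if r > 0, then for every ε > 0 there exists K'_ε > 0 such that 0 < |p(ξ)| ≤ K'_ε·|ξ|^(m−(r−ε)) for infinitely many ξ ∈ ℤⁿ \ {0}. (This characterizes ind_GS(p(D)) = r, where ind_GS(p(D)) is the infimum of all s ≥ 0 for which p(D) is GS-s.) -/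
open scoped BigOperators

/-- `|ξ| = Σⱼ |ξⱼ|`. -/
noncomputable def l1norm {n : ℕ} (ξ : Fin n → ℤ) : ℝ := ∑ j, |(ξ j : ℝ)|

/-- `‖ξ‖² = Σⱼ ξⱼ²`. -/
noncomputable def l2normSq {n : ℕ} (ξ : Fin n → ℤ) : ℝ := ∑ j, ((ξ j : ℝ)) ^ 2

/-- `u ∈ H^k(𝕋ⁿ)` in terms of its Fourier coefficients. -/
def InSobolev {n : ℕ} (k : ℝ) (u : (Fin n → ℤ) → ℂ) : Prop :=
  Summable fun ξ : Fin n → ℤ => (1 + l2normSq ξ) ^ k * ‖u ξ‖ ^ 2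

/-- Polynomial growth of Fourier coefficients (a distribution on `𝕋ⁿ`). -/
def PolyGrowth {n : ℕ} (u : (Fin n → ℤ) → ℂ) : Prop :=
  ∃ C N : ℝ, 0 < C ∧ 0 < N ∧
    ∀ ξ, ‖u ξ‖ ≤ C * (1 + Real.sqrt (l2normSq ξ)) ^ N

/-- Rapidly decreasing Fourier coefficients (a smooth function on `𝕋ⁿ`). -/
def RapidDecay {n : ℕ} (v : (Fin n → ℤ) → ℂ) : Prop :=
  ∀ N : ℝ, 0 < N → ∃ C : ℝ, 0 < C ∧
    ∀ ξ, ‖v ξ‖ ≤ C * (1 + Real.sqrt (l2normSq ξ)) ^ (-N)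

/-- `p` is a symbol of order `m`. -/
def SymbolOrder {n : ℕ} (m : ℝ) (p : (Fin n → ℤ) → ℂ) : Prop :=
  ∃ C : ℝ, 0 < C ∧ ∀ ξ, ‖p ξ‖ ≤ C * (1 + l2normSq ξ) ^ (m / 2)

/-- `p(D)` is globally hypoelliptic with loss of `r` derivatives (GH-`r`). -/
def GHr {n : ℕ} (m r : ℝ) (p : (Fin n → ℤ) → ℂ) : Prop :=
  ∀ (k : ℝ) (u : (Fin n → ℤ) → ℂ), PolyGrowth u →
    InSobolev k (fun ξ => p ξ * u ξ) → InSobolev (k + m - r) u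

/-- `p(D)` is globally solvable with loss of `r` derivatives (GS-`r`). -/
def GSr {n : ℕ} (m r : ℝ) (p : (Fin n → ℤ) → ℂ) : Prop :=
  ∀ (k : ℝ) (f : (Fin n → ℤ) → ℂ), InSobolev k f → (∀ ξ, p ξ = 0 → f ξ = 0) →
    ∃ u : (Fin n → ℤ) → ℂ, InSobolev (k + m - r) u ∧ ∀ ξ, p ξ * u ξ = f ξ

/-- `p(D)` is globally hypoelliptic (GH). -/
def GloballyHypoelliptic {n : ℕ} (p : (Fin n → ℤ) → ℂ) : Prop :=
  ∀ u : (Fin n → ℤ) → ℂ, PolyGrowth u →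
    RapidDecay (fun ξ => p ξ * u ξ) → RapidDecay u


section aux
variable {n : ℕ}

lemma l2_nonneg (ξ : Fin n → ℤ) : 0 ≤ l2normSq ξ :=
  Finset.sum_nonneg fun _ _ => sq_nonneg _

lemma one_add_l2_pos (ξ : Fin n → ℤ) : 0 < 1 + l2normSq ξ := by
  have := l2_nonneg ξ; linarith

lemma l1_nonneg (ξ : Fin n → ℤ) : 0 ≤ l1norm ξ :=
  Finset.sum_nonneg fun _ _ => abs_nonneg _

lemma one_le_l2 {ξ : Fin n → ℤ} (hξ : ξ ≠ 0) : 1 ≤ l2normSq ξ := by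
  obtain ⟨j, hj⟩ : ∃ j, ξ j ≠ 0 := by
    by_contra h; push_neg at h; exact hξ (funext h)
  have h1 : (1:ℝ) ≤ (ξ j : ℝ) ^ 2 := by
    have : (1:ℤ) ≤ (ξ j) ^ 2 := by
      rcases lt_or_gt_of_ne hj with h | h <;> nlinarith
    exact_mod_cast this
  calc (1:ℝ) ≤ (ξ j : ℝ) ^ 2 := h1
    _ ≤ l2normSq ξ := Finset.single_le_sum (f := fun i => ((ξ i : ℝ))^2) (fun i _ => sq_nonneg _) (Finset.mem_univ j)

lemma one_le_l1 {ξ : Fin n → ℤ} (hξ : ξ ≠ 0) : 1 ≤ l1norm ξ := by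
  obtain ⟨j, hj⟩ : ∃ j, ξ j ≠ 0 := by
    by_contra h; push_neg at h; exact hξ (funext h)
  have h1 : (1:ℝ) ≤ |(ξ j : ℝ)| := by
    have : (1:ℤ) ≤ |ξ j| := Int.one_le_abs (by omega)
    calc (1:ℝ) = ((1:ℤ):ℝ) := by norm_num
      _ ≤ ((|ξ j| : ℤ) : ℝ) := by exact_mod_cast this
      _ = |(ξ j : ℝ)| := by push_cast; ring
  calc (1:ℝ) ≤ |(ξ j : ℝ)| := h1
    _ ≤ l1norm ξ := Finset.single_le_sum (f := fun i => |(ξ i : ℝ)|) (fun i _ => abs_nonneg _) (Finset.mem_univ j)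

lemma l1_pos {ξ : Fin n → ℤ} (hξ : ξ ≠ 0) : 0 < l1norm ξ :=
  lt_of_lt_of_le one_pos (one_le_l1 hξ)

lemma l2_le_sq_l1 (ξ : Fin n → ℤ) : l2normSq ξ ≤ (l1norm ξ) ^ 2 := by
  have h := Finset.sum_sq_le_sq_sum_of_nonneg
    (s := Finset.univ) (f := fun j => |(ξ j : ℝ)|) (fun i _ => abs_nonneg _)
  simpa [l2normSq, l1norm, sq_abs] using h

lemma sq_l1_le (ξ : Fin n → ℤ) : (l1norm ξ) ^ 2 ≤ n * l2normSq ξ := by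
  have h := sq_sum_le_card_mul_sum_sq (s := Finset.univ) (f := fun j => |(ξ j : ℝ)|)
  simpa [l2normSq, l1norm, sq_abs] using h

end aux

section comp
variable {n : ℕ}

lemma rpow_sq_half (A : ℝ) (hA : 0 < A) (a : ℝ) : (A ^ (2:ℝ)) ^ (a/2) = A ^ a := by
  rw [← Real.rpow_mul hA.le]; ring_nf

lemma comp_upper (hn : 1 ≤ n) {ξ : Fin n → ℤ} (hξ : ξ ≠ 0) (a : ℝ) :
    (1 + l2normSq ξ) ^ (a/2) ≤ (2*n) ^ |a| * l1norm ξ ^ a := by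
  set A := l1norm ξ with hAdef
  have hA : 1 ≤ A := one_le_l1 hξ
  have hA0 : 0 < A := l1_pos hξ
  have hC0 : 0 < 1 + l2normSq ξ := one_add_l2_pos ξ
  have hA2 : A ^ (2:ℝ) = A ^ (2:ℕ) := by
    rw [← Real.rpow_natCast A 2]; norm_num
  have hn1 : (1:ℝ) ≤ (n:ℝ) := by exact_mod_cast hn
  have h2n : (2:ℝ) ≤ 2 * n := by nlinarith
  have h2n1 : (1:ℝ) ≤ 2 * n := by linarith
  have hAa : 0 < A ^ a := Real.rpow_pos_of_pos hA0 a
  rcases le_or_gt 0 a with ha | ha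
  · have hC2A : 1 + l2normSq ξ ≤ 2 * A ^ (2:ℝ) := by
      have h1 := one_le_l2 hξ
      have h2 := l2_le_sq_l1 ξ
      rw [hA2]; push_cast; nlinarith
    calc (1 + l2normSq ξ) ^ (a/2) ≤ (2 * A ^ (2:ℝ)) ^ (a/2) :=
          Real.rpow_le_rpow hC0.le hC2A (by linarith)
      _ = 2 ^ (a/2) * A ^ a := by
          rw [Real.mul_rpow (by norm_num) (Real.rpow_nonneg hA0.le _), rpow_sq_half A hA0 a]
      _ ≤ (2*n) ^ |a| * A ^ a := by
          apply mul_le_mul_of_nonneg_right _ (Real.rpow_nonneg hA0.le _)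
          calc (2:ℝ) ^ (a/2) ≤ 2 ^ |a| :=
                Real.rpow_le_rpow_of_exponent_le one_le_two
                  (by rw [abs_of_nonneg ha]; linarith)
            _ ≤ (2*n) ^ |a| := Real.rpow_le_rpow (by norm_num) h2n (abs_nonneg a)
  · have hn0 : (0:ℝ) < n := by linarith
    have hAC : A ^ (2:ℝ) / n ≤ 1 + l2normSq ξ := by
      rw [div_le_iff₀ hn0, hA2]
      have h2 := sq_l1_le ξ
      have h3 := l2_nonneg ξ
      push_cast
      nlinarith
    have hq0 : 0 < A ^ (2:ℝ) / n := by positivity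
    calc (1 + l2normSq ξ) ^ (a/2) ≤ (A ^ (2:ℝ) / n) ^ (a/2) :=
          Real.rpow_le_rpow_of_nonpos hq0 hAC (by linarith)
      _ = A ^ a * ((n:ℝ) ^ (a/2))⁻¹ := by
          rw [Real.div_rpow (Real.rpow_nonneg hA0.le _) hn0.le, rpow_sq_half A hA0 a,
            div_eq_mul_inv]
      _ = A ^ a * (n:ℝ) ^ (-(a/2)) := by rw [Real.rpow_neg hn0.le]
      _ ≤ A ^ a * (2*n) ^ |a| := by
          apply mul_le_mul_of_nonneg_left _ hAa.le
          calc (n:ℝ) ^ (-(a/2)) ≤ (n:ℝ) ^ |a| :=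
                Real.rpow_le_rpow_of_exponent_le hn1
                  (by rw [abs_of_neg ha]; linarith)
            _ ≤ (2*n) ^ |a| := Real.rpow_le_rpow hn0.le (by linarith) (abs_nonneg a)
      _ = (2*n) ^ |a| * A ^ a := mul_comm _ _

lemma comp_lower (hn : 1 ≤ n) {ξ : Fin n → ℤ} (hξ : ξ ≠ 0) (a : ℝ) :
    l1norm ξ ^ a ≤ (2*n) ^ |a| * (1 + l2normSq ξ) ^ (a/2) := by
  set A := l1norm ξ with hAdef
  have hA : 1 ≤ A := one_le_l1 hξ
  have hA0 : 0 < A := l1_pos hξ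
  have hC0 : 0 < 1 + l2normSq ξ := one_add_l2_pos ξ
  have hA2 : A ^ (2:ℝ) = A ^ (2:ℕ) := by
    rw [← Real.rpow_natCast A 2]; norm_num
  have hn1 : (1:ℝ) ≤ (n:ℝ) := by exact_mod_cast hn
  have hn0 : (0:ℝ) < n := by linarith
  have h2n : (2:ℝ) ≤ 2 * n := by nlinarith
  have hCa : 0 < (1 + l2normSq ξ) ^ (a/2) := Real.rpow_pos_of_pos hC0 _
  rw [← rpow_sq_half A hA0 a]
  rcases le_or_gt 0 a with ha | ha
  · have hACn : A ^ (2:ℝ) ≤ n * (1 + l2normSq ξ) := by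
      rw [hA2]
      have h2 := sq_l1_le ξ
      have h3 := l2_nonneg ξ
      push_cast; nlinarith
    calc (A ^ (2:ℝ)) ^ (a/2) ≤ ((n:ℝ) * (1 + l2normSq ξ)) ^ (a/2) :=
          Real.rpow_le_rpow (Real.rpow_nonneg hA0.le _) hACn (by linarith)
      _ = (n:ℝ) ^ (a/2) * (1 + l2normSq ξ) ^ (a/2) := Real.mul_rpow hn0.le hC0.le
      _ ≤ (2*n) ^ |a| * (1 + l2normSq ξ) ^ (a/2) := by
          apply mul_le_mul_of_nonneg_right _ hCa.le
          calc (n:ℝ) ^ (a/2) ≤ (n:ℝ) ^ |a| :=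
                Real.rpow_le_rpow_of_exponent_le hn1
                  (by rw [abs_of_nonneg ha]; linarith)
            _ ≤ (2*n) ^ |a| := Real.rpow_le_rpow hn0.le (by linarith) (abs_nonneg a)
  · have hC2A : (1 + l2normSq ξ) / 2 ≤ A ^ (2:ℝ) := by
      rw [hA2]
      have h1 := one_le_l2 hξ
      have h2 := l2_le_sq_l1 ξ
      push_cast; nlinarith
    have hq0 : 0 < (1 + l2normSq ξ) / 2 := by positivity
    calc (A ^ (2:ℝ)) ^ (a/2) ≤ ((1 + l2normSq ξ) / 2) ^ (a/2) :=
          Real.rpow_le_rpow_of_nonpos hq0 hC2A (by linarith)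
      _ = (1 + l2normSq ξ) ^ (a/2) * ((2:ℝ) ^ (a/2))⁻¹ := by
          rw [Real.div_rpow hC0.le (by norm_num), div_eq_mul_inv]
      _ = (1 + l2normSq ξ) ^ (a/2) * (2:ℝ) ^ (-(a/2)) := by
          rw [Real.rpow_neg (by norm_num : (0:ℝ) ≤ 2)]
      _ ≤ (1 + l2normSq ξ) ^ (a/2) * (2*n) ^ |a| := by
          apply mul_le_mul_of_nonneg_left _ hCa.le
          calc (2:ℝ) ^ (-(a/2)) ≤ (2:ℝ) ^ |a| :=
                Real.rpow_le_rpow_of_exponent_le one_le_two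
                  (by rw [abs_of_neg ha]; linarith)
            _ ≤ (2*n) ^ |a| := Real.rpow_le_rpow (by norm_num) h2n (abs_nonneg a)
      _ = (2*n) ^ |a| * (1 + l2normSq ξ) ^ (a/2) := mul_comm _ _

lemma two_n_pow_pos (hn : 1 ≤ n) (b : ℝ) : 0 < (2*(n:ℝ)) ^ b := by
  have : (0:ℝ) < n := by exact_mod_cast Nat.lt_of_lt_of_le Nat.zero_lt_one hn
  positivity

end comp

def Lam {n : ℕ} (m s : ℝ) (p : (Fin n → ℤ) → ℂ) : Prop :=
  ∃ c : ℝ, 0 < c ∧ ∀ ξ, p ξ ≠ 0 →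
    c * (1 + l2normSq ξ) ^ ((m - s)/2) ≤ ‖p ξ‖

lemma rpow_two_mul {C : ℝ} (hC : 0 < C) (b : ℝ) : (C ^ b) ^ (2:ℕ) = C ^ (2*b) := by
  rw [← Real.rpow_natCast (C ^ b) 2, ← Real.rpow_mul hC.le]; ring_nf

lemma lam_to_gs {n : ℕ} {m s : ℝ} {p : (Fin n → ℤ) → ℂ} (h : Lam m s p) : GSr m s p := by
  classical
  obtain ⟨c, hc, hbound⟩ := h
  intro k f hf hfz
  refine ⟨fun ξ => if p ξ = 0 then 0 else f ξ / p ξ, ?_, ?_⟩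
  · apply Summable.of_nonneg_of_le (fun ξ => ?_) (fun ξ => ?_)
      (hf.mul_left ((c⁻¹) ^ (2:ℕ)))
    · have := one_add_l2_pos ξ
      positivity
    · by_cases hpξ : p ξ = 0
      · have h1 := one_add_l2_pos ξ
        have h2 : (0:ℝ) ≤ ‖f ξ‖ := norm_nonneg _
        simp only [hpξ, if_pos, map_zero, norm_zero]
        norm_num
        positivity
      · set C := 1 + l2normSq ξ with hCdef
        have hC0 : 0 < C := one_add_l2_pos ξ
        have hP : 0 < ‖p ξ‖ := norm_pos_iff.mpr hpξ
        have hx := hbound ξ hpξ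
        simp only [hpξ, if_neg, not_false_iff]
        have hX : 0 < C ^ ((m-s)/2) := Real.rpow_pos_of_pos hC0 _
        have habsdiv : ‖f ξ / p ξ‖ = ‖f ξ‖ / ‖p ξ‖ :=
          norm_div _ _
        rw [habsdiv]
        have hF : (0:ℝ) ≤ ‖f ξ‖ := norm_nonneg _
        have step1 : ‖f ξ‖ / ‖p ξ‖
            ≤ ‖f ξ‖ / (c * C ^ ((m-s)/2)) := by
          apply div_le_div_of_nonneg_left hF (by positivity) hx
        have step2 : (‖f ξ‖ / ‖p ξ‖) ^ (2:ℕ)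
            ≤ (‖f ξ‖ / (c * C ^ ((m-s)/2))) ^ (2:ℕ) := by
          apply pow_le_pow_left₀ (by positivity) step1
        calc C ^ (k + m - s) * (‖f ξ‖ / ‖p ξ‖) ^ (2:ℕ)
            ≤ C ^ (k + m - s) * (‖f ξ‖ / (c * C ^ ((m-s)/2))) ^ (2:ℕ) := by
              apply mul_le_mul_of_nonneg_left step2 (Real.rpow_nonneg hC0.le _)
          _ = (c⁻¹) ^ (2:ℕ) * (C ^ k * ‖f ξ‖ ^ (2:ℕ)) := by
              rw [div_pow, mul_pow, rpow_two_mul hC0]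
              rw [show (2:ℝ) * ((m-s)/2) = m - s by ring]
              have hCms : C ^ (m - s) ≠ 0 := ne_of_gt (Real.rpow_pos_of_pos hC0 _)
              have hkms : C ^ (k + m - s) = C ^ k * C ^ (m - s) := by
                rw [← Real.rpow_add hC0]; ring_nf
              field_simp [hkms]
              rw [hkms]; ring
  · intro ξ
    by_cases hpξ : p ξ = 0
    · simp [hpξ, hfz ξ hpξ]
    · simp only [hpξ, if_neg, not_false_iff]
      field_simp

noncomputable def badSeq {n : ℕ} {p : (Fin n → ℤ) → ℂ} {ρ : (Fin n → ℤ) → ℝ}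
    (hρ : ∀ ξ, p ξ ≠ 0 → 0 < ρ ξ)
    (key : ∀ c : ℝ, 0 < c → ∃ ξ, p ξ ≠ 0 ∧ ρ ξ < c) :
    ℕ → {ξ : Fin n → ℤ // p ξ ≠ 0}
  | 0 => ⟨(key 1 one_pos).choose, (key 1 one_pos).choose_spec.1⟩
  | (j+1) =>
      ⟨(key (min ((1/2:ℝ)^(j+1)) (ρ (badSeq hρ key j).1))
          (lt_min (by positivity) (hρ _ (badSeq hρ key j).2))).choose,
       (key (min ((1/2:ℝ)^(j+1)) (ρ (badSeq hρ key j).1))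
          (lt_min (by positivity) (hρ _ (badSeq hρ key j).2))).choose_spec.1⟩

lemma badSeq_lt {n : ℕ} {p : (Fin n → ℤ) → ℂ} {ρ : (Fin n → ℤ) → ℝ}
    (hρ : ∀ ξ, p ξ ≠ 0 → 0 < ρ ξ)
    (key : ∀ c : ℝ, 0 < c → ∃ ξ, p ξ ≠ 0 ∧ ρ ξ < c) (j : ℕ) :
    ρ (badSeq hρ key j).1 < (1/2:ℝ)^j := by
  cases j with
  | zero => simpa [badSeq] using (key 1 one_pos).choose_spec.2
  | succ j =>
      have h := (key (min ((1/2:ℝ)^(j+1)) (ρ (badSeq hρ key j).1))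
          (lt_min (by positivity) (hρ _ (badSeq hρ key j).2))).choose_spec.2
      calc ρ (badSeq hρ key (j+1)).1 = _ := rfl
        _ < _ := h
        _ ≤ (1/2:ℝ)^(j+1) := min_le_left _ _

lemma badSeq_anti {n : ℕ} {p : (Fin n → ℤ) → ℂ} {ρ : (Fin n → ℤ) → ℝ}
    (hρ : ∀ ξ, p ξ ≠ 0 → 0 < ρ ξ)
    (key : ∀ c : ℝ, 0 < c → ∃ ξ, p ξ ≠ 0 ∧ ρ ξ < c) (j : ℕ) :
    ρ (badSeq hρ key (j+1)).1 < ρ (badSeq hρ key j).1 := by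
  have h := (key (min ((1/2:ℝ)^(j+1)) (ρ (badSeq hρ key j).1))
      (lt_min (by positivity) (hρ _ (badSeq hρ key j).2))).choose_spec.2
  calc ρ (badSeq hρ key (j+1)).1 = _ := rfl
    _ < _ := h
    _ ≤ ρ (badSeq hρ key j).1 := min_le_right _ _

lemma badSeq_inj {n : ℕ} {p : (Fin n → ℤ) → ℂ} {ρ : (Fin n → ℤ) → ℝ}
    (hρ : ∀ ξ, p ξ ≠ 0 → 0 < ρ ξ)
    (key : ∀ c : ℝ, 0 < c → ∃ ξ, p ξ ≠ 0 ∧ ρ ξ < c) :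
    Function.Injective (fun j => (badSeq hρ key j).1) := by
  have hanti : StrictAnti (fun j => ρ (badSeq hρ key j).1) :=
    strictAnti_nat_of_succ_lt (badSeq_anti hρ key)
  intro i j hij
  by_contra hne
  rcases lt_or_gt_of_ne hne with h | h
  · exact absurd (congrArg ρ hij) (ne_of_gt (hanti h))
  · exact absurd (congrArg ρ hij) (ne_of_lt (hanti h))

lemma gs_to_lam {n : ℕ} {m s : ℝ} {p : (Fin n → ℤ) → ℂ} (h : GSr m s p) : Lam m s p := by
  classical
  by_contra hca
  rw [Lam] at hca; push_neg at hca
  set ρ : (Fin n → ℤ) → ℝ :=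
    fun ξ => ‖p ξ‖ / (1 + l2normSq ξ) ^ ((m - s)/2) with hρdef
  have hρ : ∀ ξ, p ξ ≠ 0 → 0 < ρ ξ := fun ξ hξ =>
    div_pos (norm_pos_iff.mpr hξ) (Real.rpow_pos_of_pos (one_add_l2_pos ξ) _)
  have key : ∀ c : ℝ, 0 < c → ∃ ξ, p ξ ≠ 0 ∧ ρ ξ < c := by
    intro c hc
    obtain ⟨ξ, hpξ, hlt⟩ := hca c hc
    exact ⟨ξ, hpξ, (div_lt_iff₀ (Real.rpow_pos_of_pos (one_add_l2_pos ξ) _)).mpr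
      (by rw [mul_comm] at hlt ⊢; exact hlt)⟩
  set g : ℕ → (Fin n → ℤ) := fun j => (badSeq hρ key j).1 with hgdef
  have hInj : Function.Injective g := badSeq_inj hρ key
  set f : (Fin n → ℤ) → ℂ := fun ξ => if ∃ j, g j = ξ then ((ρ ξ : ℝ) : ℂ) else 0
    with hfdef
  have hρnn : ∀ ξ, 0 ≤ ρ ξ := fun ξ =>
    div_nonneg (norm_nonneg _) (Real.rpow_nonneg (one_add_l2_pos ξ).le _)
  have habsf : ∀ j, ‖f (g j)‖ = ρ (g j) := by
    intro j
    show ‖if ∃ j', g j' = g j then ((ρ (g j) : ℝ) : ℂ) else 0‖ = ρ (g j)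
    rw [if_pos (⟨j, rfl⟩ : ∃ j', g j' = g j), Complex.norm_real, Real.norm_eq_abs]
    exact abs_of_nonneg (hρnn _)
  have hfz : ∀ ξ, p ξ = 0 → f ξ = 0 := by
    intro ξ hpξ
    simp only [hfdef]
    rw [if_neg]
    rintro ⟨j, rfl⟩
    exact (badSeq hρ key j).2 hpξ
  have hSob : InSobolev 0 f := by
    rw [InSobolev]
    set t : (Fin n → ℤ) → ℝ :=
      fun ξ => (1 + l2normSq ξ) ^ (0:ℝ) * ‖f ξ‖ ^ 2 with htdef
    rw [← hInj.summable_iff (f := t) ?van]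
    case van =>
      intro ξ hξ
      have hfξ : f ξ = 0 := by
        simp only [hfdef]
        rw [if_neg]
        rintro ⟨j, rfl⟩
        exact hξ ⟨j, rfl⟩
      simp [htdef, hfξ]
    · apply Summable.of_nonneg_of_le (g := fun j => t (g j))
        (fun j => ?_) (fun j => ?_) (summable_geometric_of_lt_one
          (by norm_num : (0:ℝ) ≤ 1/2) (by norm_num))
      · have := one_add_l2_pos (g j)
        simp only [htdef]
        positivity
      · simp only [htdef, Real.rpow_zero, one_mul, habsf j]
        have h1 := badSeq_lt hρ key j
        have h2 := hρnn (g j)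
        have h3 : ((1:ℝ)/2)^j ≤ 1 := pow_le_one₀ (by norm_num) (by norm_num)
        have h4 : (0:ℝ) ≤ (1/2:ℝ)^j := by positivity
        nlinarith
  obtain ⟨u, hu, hupf⟩ := h 0 f hSob hfz
  rw [InSobolev] at hu
  have hcomp := hu.comp_injective hInj
  have hone : (fun j => (1 + l2normSq (g j)) ^ (0 + m - s) * ‖u (g j)‖ ^ 2)
      = fun _ : ℕ => (1:ℝ) := by
    funext j
    set ξ := g j with hξdef
    have hpξ : p ξ ≠ 0 := (badSeq hρ key j).2
    have hC0 : 0 < 1 + l2normSq ξ := one_add_l2_pos ξ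
    have hX : 0 < (1 + l2normSq ξ) ^ ((m-s)/2) := Real.rpow_pos_of_pos hC0 _
    have hP : 0 < ‖p ξ‖ := norm_pos_iff.mpr hpξ
    have habs : ‖p ξ‖ * ‖u ξ‖ = ρ ξ := by
      rw [← norm_mul, hupf ξ]
      exact habsf j
    have huabs : ‖u ξ‖ = ((1 + l2normSq ξ) ^ ((m-s)/2))⁻¹ := by
      have : ‖u ξ‖ = ρ ξ / ‖p ξ‖ := by
        rw [← habs, mul_comm, mul_div_assoc, div_self hP.ne', mul_one]
      rw [this, hρdef]
      field_simp
    rw [huabs]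
    rw [show (0:ℝ) + m - s = m - s by ring]
    rw [inv_pow, ← Real.rpow_natCast ((1 + l2normSq ξ) ^ ((m-s)/2)) 2,
      ← Real.rpow_mul hC0.le]
    rw [show (m-s)/2 * (2:ℕ) = m - s by push_cast; ring]
    exact mul_inv_cancel₀ (ne_of_gt (Real.rpow_pos_of_pos hC0 _))
  have hcomp2 : Summable (fun j =>
      (1 + l2normSq (g j)) ^ (0 + m - s) * ‖u (g j)‖ ^ 2) := hcomp
  rw [hone] at hcomp2
  exact one_ne_zero ((summable_const_iff (1:ℝ)).mp hcomp2)

lemma finite_l1_le {n : ℕ} (M : ℝ) : {ξ : Fin n → ℤ | l1norm ξ ≤ M}.Finite := by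
  apply Set.Finite.subset
    (Set.Finite.pi (t := fun _ : Fin n => Set.Icc (-(⌈M⌉)) ⌈M⌉) fun i => Set.finite_Icc _ _)
  intro ξ hξ
  simp only [Set.mem_pi, Set.mem_univ, Set.mem_Icc, forall_true_left]
  intro j
  have h1 : |(ξ j : ℝ)| ≤ M :=
    le_trans (Finset.single_le_sum (f := fun i => |(ξ i : ℝ)|)
      (fun i _ => abs_nonneg _) (Finset.mem_univ j)) hξ
  have h2 : ((|ξ j| : ℤ) : ℝ) ≤ (⌈M⌉ : ℝ) := by
    push_cast
    exact le_trans h1 (Int.le_ceil M)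
  have h3 : |ξ j| ≤ ⌈M⌉ := by exact_mod_cast h2
  exact abs_le.mp h3

/-- a uniform positive lower constant over a finite set -/
lemma finset_lower {n : ℕ} {m s : ℝ} (p : (Fin n → ℤ) → ℂ) (G : Finset (Fin n → ℤ)) :
    ∃ c : ℝ, 0 < c ∧ ∀ ξ ∈ G, p ξ ≠ 0 →
      c * (1 + l2normSq ξ) ^ ((m - s)/2) ≤ ‖p ξ‖ := by
  classical
  induction G using Finset.induction with
  | empty => exact ⟨1, one_pos, by simp⟩
  | @insert a G ha ih =>
      obtain ⟨c, hc, hG⟩ := ih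
      by_cases hpa : p a = 0
      · refine ⟨c, hc, ?_⟩
        intro ξ hξ hpξ
        rcases Finset.mem_insert.mp hξ with rfl | hξG
        · exact absurd hpa hpξ
        · exact hG ξ hξG hpξ
      · have hCa : 0 < (1 + l2normSq a) ^ ((m - s)/2) :=
          Real.rpow_pos_of_pos (one_add_l2_pos a) _
        have hPa : 0 < ‖p a‖ := norm_pos_iff.mpr hpa
        refine ⟨min c (‖p a‖ / (1 + l2normSq a) ^ ((m - s)/2)),
          lt_min hc (by positivity), ?_⟩
        intro ξ hξ hpξ
        rcases Finset.mem_insert.mp hξ with rfl | hξG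
        · calc min c (‖p ξ‖ / (1 + l2normSq ξ) ^ ((m - s)/2))
                * (1 + l2normSq ξ) ^ ((m - s)/2)
              ≤ (‖p ξ‖ / (1 + l2normSq ξ) ^ ((m - s)/2))
                * (1 + l2normSq ξ) ^ ((m - s)/2) :=
              mul_le_mul_of_nonneg_right (min_le_right _ _) hCa.le
            _ = ‖p ξ‖ := div_mul_cancel₀ _ hCa.ne'
        · calc min c (‖p a‖ / (1 + l2normSq a) ^ ((m - s)/2))
                * (1 + l2normSq ξ) ^ ((m - s)/2)
              ≤ c * (1 + l2normSq ξ) ^ ((m - s)/2) :=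
              mul_le_mul_of_nonneg_right (min_le_left _ _)
                (Real.rpow_nonneg (one_add_l2_pos ξ).le _)
            _ ≤ ‖p ξ‖ := hG ξ hξG hpξ

theorem stmt_10 {n : ℕ} (hn : 1 ≤ n) (m r : ℝ) (hr : 0 ≤ r)
    (p : (Fin n → ℤ) → ℂ) (hp : SymbolOrder m p) :
    ((∀ s : ℝ, r < s → GSr m s p) ∧ (∀ s : ℝ, 0 ≤ s → s < r → ¬ GSr m s p)) ↔
      ((∀ ε : ℝ, 0 < ε → ∃ K : ℝ, 0 < K ∧ ∀ ξ : Fin n → ℤ, ξ ≠ 0 → p ξ ≠ 0 →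
          K * l1norm ξ ^ (m - (r + ε)) ≤ ‖p ξ‖) ∧
        (0 < r → ∀ ε : ℝ, 0 < ε → ∃ K' : ℝ, 0 < K' ∧
          {ξ : Fin n → ℤ | ξ ≠ 0 ∧ 0 < ‖p ξ‖ ∧
            ‖p ξ‖ ≤ K' * l1norm ξ ^ (m - (r - ε))}.Infinite)) := by
  classical
  have hn0 : (0:ℝ) < (n:ℝ) := by exact_mod_cast Nat.lt_of_lt_of_le Nat.zero_lt_one hn
  constructor
  · rintro ⟨hgs, hngs⟩
    constructor
    · -- (i)
      intro ε hε
      obtain ⟨c, hc, hlam⟩ := gs_to_lam (hgs (r + ε) (by linarith))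
      set a := m - (r + ε) with hadef
      have hW : (0:ℝ) < (2*(n:ℝ)) ^ |a| := two_n_pow_pos hn _
      refine ⟨c / (2*(n:ℝ)) ^ |a|, by positivity, ?_⟩
      intro ξ hξ0 hpξ
      have h1 := comp_lower hn hξ0 a
      have h2 := hlam ξ hpξ
      calc c / (2*(n:ℝ)) ^ |a| * l1norm ξ ^ a
          ≤ c / (2*(n:ℝ)) ^ |a| * ((2*(n:ℝ)) ^ |a| * (1 + l2normSq ξ) ^ (a/2)) :=
            mul_le_mul_of_nonneg_left h1 (by positivity)
        _ = c * (1 + l2normSq ξ) ^ (a/2) := by field_simp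
        _ ≤ ‖p ξ‖ := h2
    · -- (ii)
      intro hr0 ε hε
      set s := r - min ε r / 2 with hsdef
      have hmin : 0 < min ε r := lt_min hε hr0
      have hminr : min ε r ≤ r := min_le_right _ _
      have hminε : min ε r ≤ ε := min_le_left _ _
      have hs0 : 0 ≤ s := by simp only [hsdef]; linarith
      have hsr : s < r := by simp only [hsdef]; linarith
      have hse : r - ε ≤ s := by simp only [hsdef]; linarith
      have hW : (0:ℝ) < (2*(n:ℝ)) ^ |m - s| := two_n_pow_pos hn _
      refine ⟨(2*(n:ℝ)) ^ |m - s|, hW, ?_⟩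
      by_contra hfin
      rw [Set.not_infinite] at hfin
      obtain ⟨c₀, hc₀, hcF⟩ := finset_lower (m := m) (s := s) p (insert 0 hfin.toFinset)
      apply hngs s hs0 hsr
      apply lam_to_gs
      refine ⟨min c₀ 1, lt_min hc₀ one_pos, ?_⟩
      intro ξ hpξ
      have hX : 0 < (1 + l2normSq ξ) ^ ((m - s)/2) :=
        Real.rpow_pos_of_pos (one_add_l2_pos ξ) _
      by_cases hmem : ξ ∈ insert 0 hfin.toFinset
      · exact le_trans (mul_le_mul_of_nonneg_right (min_le_left _ _) hX.le)
          (hcF ξ hmem hpξ)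
      · have hξ0 : ξ ≠ 0 := fun h => hmem (by rw [h]; exact Finset.mem_insert_self 0 _)
        have hgt : (2*(n:ℝ)) ^ |m - s| * l1norm ξ ^ (m - (r - ε)) < ‖p ξ‖ := by
          by_contra hle
          push_neg at hle
          exact hmem (Finset.mem_insert_of_mem (hfin.mem_toFinset.mpr
            ⟨hξ0, norm_pos_iff.mpr hpξ, hle⟩))
        have hA1 : 1 ≤ l1norm ξ := one_le_l1 hξ0
        have hmono : l1norm ξ ^ (m - s) ≤ l1norm ξ ^ (m - (r - ε)) :=
          Real.rpow_le_rpow_of_exponent_le hA1 (by linarith)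
        calc min c₀ 1 * (1 + l2normSq ξ) ^ ((m - s)/2)
            ≤ 1 * (1 + l2normSq ξ) ^ ((m - s)/2) :=
              mul_le_mul_of_nonneg_right (min_le_right _ _) hX.le
          _ = (1 + l2normSq ξ) ^ ((m - s)/2) := one_mul _
          _ ≤ (2*(n:ℝ)) ^ |m - s| * l1norm ξ ^ (m - s) := comp_upper hn hξ0 (m - s)
          _ ≤ (2*(n:ℝ)) ^ |m - s| * l1norm ξ ^ (m - (r - ε)) :=
              mul_le_mul_of_nonneg_left hmono hW.le
          _ ≤ ‖p ξ‖ := hgt.le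
  · rintro ⟨hi, hii⟩
    constructor
    · -- GS for s > r
      intro s hs
      apply lam_to_gs
      obtain ⟨K, hK, hKb⟩ := hi (s - r) (by linarith)
      rw [show m - (r + (s - r)) = m - s by ring] at hKb
      have hW : (0:ℝ) < (2*(n:ℝ)) ^ |m - s| := two_n_pow_pos hn _
      have hmain : ∀ ξ : Fin n → ℤ, ξ ≠ 0 → p ξ ≠ 0 →
          K / (2*(n:ℝ)) ^ |m - s| * (1 + l2normSq ξ) ^ ((m - s)/2) ≤ ‖p ξ‖ := by
        intro ξ hξ0 hpξ
        have h1 := comp_upper hn hξ0 (m - s)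
        calc K / (2*(n:ℝ)) ^ |m - s| * (1 + l2normSq ξ) ^ ((m - s)/2)
            ≤ K / (2*(n:ℝ)) ^ |m - s| * ((2*(n:ℝ)) ^ |m - s| * l1norm ξ ^ (m - s)) :=
              mul_le_mul_of_nonneg_left h1 (by positivity)
          _ = K * l1norm ξ ^ (m - s) := by field_simp
          _ ≤ ‖p ξ‖ := hKb ξ hξ0 hpξ
      have hzero : l2normSq (0 : Fin n → ℤ) = 0 := by
        simp [l2normSq]
      by_cases h0 : p 0 = 0
      · refine ⟨K / (2*(n:ℝ)) ^ |m - s|, by positivity, ?_⟩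
        intro ξ hpξ
        have hξ0 : ξ ≠ 0 := fun h => hpξ (h ▸ h0)
        exact hmain ξ hξ0 hpξ
      · have hP0 : 0 < ‖p 0‖ := norm_pos_iff.mpr h0
        refine ⟨min (K / (2*(n:ℝ)) ^ |m - s|) (‖p 0‖),
          lt_min (by positivity) hP0, ?_⟩
        intro ξ hpξ
        by_cases hξ0 : ξ = 0
        · subst hξ0
          rw [hzero]
          norm_num
        · have hX : 0 < (1 + l2normSq ξ) ^ ((m - s)/2) :=
            Real.rpow_pos_of_pos (one_add_l2_pos ξ) _
          exact le_trans (mul_le_mul_of_nonneg_right (min_le_left _ _) hX.le)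
            (hmain ξ hξ0 hpξ)
    · -- not GS for s < r
      intro s hs0 hsr hgs
      have hr0 : 0 < r := lt_of_le_of_lt hs0 hsr
      obtain ⟨c, hc, hcb⟩ := gs_to_lam hgs
      set δ := (r - s)/2 with hδdef
      have hδ : 0 < δ := by simp only [hδdef]; linarith
      obtain ⟨K', hK', hSinf⟩ := hii hr0 δ hδ
      have hexp : m - (r - δ) = (m - s) + (-δ) := by simp only [hδdef]; ring
      set W := (2*(n:ℝ)) ^ |m - s| with hWdef
      have hW : (0:ℝ) < W := two_n_pow_pos hn _
      set Q := W * K' / c with hQdef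
      have hQ : 0 < Q := by positivity
      apply hSinf
      apply Set.Finite.subset (finite_l1_le (Q ^ (1/δ)))
      rintro ξ ⟨hξ0, hppos, hple⟩
      have hpξ : p ξ ≠ 0 := by
        intro h
        rw [h, norm_zero] at hppos
        exact lt_irrefl 0 hppos
      have hA0 : 0 < l1norm ξ := l1_pos hξ0
      have hAd : 0 < l1norm ξ ^ δ := Real.rpow_pos_of_pos hA0 _
      have hX : 0 < (1 + l2normSq ξ) ^ ((m - s)/2) :=
        Real.rpow_pos_of_pos (one_add_l2_pos ξ) _
      have he : l1norm ξ ^ (m - (r - δ)) = l1norm ξ ^ (m - s) * (l1norm ξ ^ δ)⁻¹ := by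
        rw [hexp, Real.rpow_add hA0, Real.rpow_neg hA0.le]
      have h1 := hcb ξ hpξ
      have h2 : ‖p ξ‖ ≤ K' * (l1norm ξ ^ (m - s) * (l1norm ξ ^ δ)⁻¹) := by
        rw [← he]; exact hple
      have h3 := comp_lower hn hξ0 (m - s)
      have h4 : c * (1 + l2normSq ξ) ^ ((m - s)/2) * l1norm ξ ^ δ
          ≤ K' * l1norm ξ ^ (m - s) := by
        have := mul_le_mul_of_nonneg_right (le_trans h1 h2) hAd.le
        calc c * (1 + l2normSq ξ) ^ ((m - s)/2) * l1norm ξ ^ δ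
            ≤ K' * (l1norm ξ ^ (m - s) * (l1norm ξ ^ δ)⁻¹) * l1norm ξ ^ δ := this
          _ = K' * l1norm ξ ^ (m - s) := by field_simp
      have h5 : K' * l1norm ξ ^ (m - s) ≤ K' * (W * (1 + l2normSq ξ) ^ ((m - s)/2)) :=
        mul_le_mul_of_nonneg_left h3 hK'.le
      have h6 : c * l1norm ξ ^ δ ≤ K' * W := by
        have h7 : (c * l1norm ξ ^ δ) * (1 + l2normSq ξ) ^ ((m - s)/2)
            ≤ (K' * W) * (1 + l2normSq ξ) ^ ((m - s)/2) := by
          calc (c * l1norm ξ ^ δ) * (1 + l2normSq ξ) ^ ((m - s)/2)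
              = c * (1 + l2normSq ξ) ^ ((m - s)/2) * l1norm ξ ^ δ := by ring
            _ ≤ K' * l1norm ξ ^ (m - s) := h4
            _ ≤ K' * (W * (1 + l2normSq ξ) ^ ((m - s)/2)) := h5
            _ = (K' * W) * (1 + l2normSq ξ) ^ ((m - s)/2) := by ring
        exact le_of_mul_le_mul_right h7 hX
      have h8 : l1norm ξ ^ δ ≤ Q := by
        rw [hQdef]
        rw [div_eq_mul_inv, mul_comm W K']
        rw [← div_eq_mul_inv, le_div_iff₀ hc]
        linarith [h6]
      show l1norm ξ ≤ Q ^ (1/δ)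
      have h9 : (l1norm ξ ^ δ) ^ (1/δ) ≤ Q ^ (1/δ) :=
        Real.rpow_le_rpow hAd.le h8 (by positivity)
      rwa [← Real.rpow_mul hA0.le, mul_one_div, div_self hδ.ne', Real.rpow_one] at h9
end

section
/- Let α be an irrational real number whose irrationality measure μ(α) is finite, where μ(α) is the infimum of all μ > 0 such that the set of rational numbers q with 0 < |α − q| < 1/(den q)^μ is finite (den q denoting the denominator of q in lowest terms). Then: (a) for every real r > μ(α) there exists K > 0 such that |ξ₁ − α·ξ₂| ≥ K·(|ξ₁| + |ξ₂|)^(1−r) for all (ξ₁, ξ₂) ∈ ℤ² \ {(0,0)}; and (b) for every real r with 0 ≤ r < μ(α), no such constant K exists. (In the paper's terminology: the global hypoellipticity index of the vector field ∂_{x₁} − α∂_{x₂} on 𝕋² equals μ(α).) -/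
open Real

/-- Rationals with bounded numerator and denominator form a finite set. -/
lemma aux_finite_rat (A B : ℝ) : {q : ℚ | (|(q.num : ℝ)|) ≤ A ∧ (q.den : ℝ) ≤ B}.Finite := by
  apply Set.Finite.of_finite_image (f := fun q : ℚ => (q.num, q.den))
  · apply Set.Finite.subset
      (Set.Finite.prod (Set.finite_Icc (-⌈A⌉) ⌈A⌉) (Set.finite_Icc 0 ⌈B⌉.toNat))
    rintro ⟨n, d⟩ ⟨q, ⟨h1, h2⟩, hfq⟩
    simp only [Prod.mk.injEq] at hfq
    obtain ⟨rfl, rfl⟩ := hfq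
    have hn : (|q.num| : ℝ) ≤ (⌈A⌉ : ℝ) := by
      calc (|q.num| : ℝ) = |(q.num : ℝ)| := by push_cast; ring
        _ ≤ A := h1
        _ ≤ ⌈A⌉ := Int.le_ceil A
    have hn' : |q.num| ≤ ⌈A⌉ := by exact_mod_cast hn
    have hd : ((q.den : ℤ) : ℝ) ≤ ((⌈B⌉ : ℤ) : ℝ) := by
      push_cast
      exact h2.trans (Int.le_ceil B)
    have hd' : (q.den : ℤ) ≤ ⌈B⌉ := by exact_mod_cast hd
    constructor
    · simp only [Set.mem_Icc]
      constructor
      · linarith [neg_abs_le q.num]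
      · linarith [le_abs_self q.num]
    · simp only [Set.mem_Icc]
      exact ⟨Nat.zero_le _, by omega⟩
  · intro p _ q _ h
    exact Rat.ext (congrArg Prod.fst h) (congrArg Prod.snd h)

/-- The global hypoellipticity index of `∂_{x₁} - α ∂_{x₂}` on `𝕋²` equals the
irrationality measure `μ(α)` of the irrational number `α` (assumed finite). -/
theorem stmt_14 (α : ℝ) (hα : Irrational α) (μ : ℝ)
    (hμ : IsGLB {s : ℝ | 0 < s ∧
      {q : ℚ | 0 < |α - (q : ℝ)| ∧ |α - (q : ℝ)| < 1 / (q.den : ℝ) ^ s}.Finite} μ) :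
    (∀ r : ℝ, μ < r → ∃ K : ℝ, 0 < K ∧ ∀ ξ₁ ξ₂ : ℤ, ¬(ξ₁ = 0 ∧ ξ₂ = 0) →
        K * ((|ξ₁| + |ξ₂| : ℤ) : ℝ) ^ ((1 : ℝ) - r) ≤ |(ξ₁ : ℝ) - α * (ξ₂ : ℝ)|) ∧
    (∀ r : ℝ, 0 ≤ r → r < μ → ¬∃ K : ℝ, 0 < K ∧ ∀ ξ₁ ξ₂ : ℤ, ¬(ξ₁ = 0 ∧ ξ₂ = 0) →
        K * ((|ξ₁| + |ξ₂| : ℤ) : ℝ) ^ ((1 : ℝ) - r) ≤ |(ξ₁ : ℝ) - α * (ξ₂ : ℝ)|) := by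
  set S : Set ℝ := {s : ℝ | 0 < s ∧
      {q : ℚ | 0 < |α - (q : ℝ)| ∧ |α - (q : ℝ)| < 1 / (q.den : ℝ) ^ s}.Finite} with hS
  -- every element of S is ≥ 2, by Dirichlet approximation
  have hlb : ∀ s ∈ S, (2 : ℝ) ≤ s := by
    intro s hs
    by_contra hlt
    push_neg at hlt
    have hinf := Real.infinite_rat_abs_sub_lt_one_div_den_sq_of_irrational hα
    have hsub : {q : ℚ | |α - (q : ℝ)| < 1 / (q.den : ℝ) ^ 2} ⊆
        {q : ℚ | 0 < |α - (q : ℝ)| ∧ |α - (q : ℝ)| < 1 / (q.den : ℝ) ^ s} := by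
      intro q hq
      have hd1 : (1 : ℝ) ≤ (q.den : ℝ) := by exact_mod_cast q.pos
      have hpos : 0 < |α - (q : ℝ)| := abs_pos.2 (sub_ne_zero.2 (hα.ne_rat q))
      refine ⟨hpos, lt_of_lt_of_le hq ?_⟩
      have h1 : (q.den : ℝ) ^ s ≤ (q.den : ℝ) ^ (2 : ℝ) :=
        Real.rpow_le_rpow_of_exponent_le hd1 hlt.le
      have h2 : (q.den : ℝ) ^ (2 : ℝ) = (q.den : ℝ) ^ (2 : ℕ) := by
        rw [← Real.rpow_natCast]; norm_num
      have hsp : (0 : ℝ) < (q.den : ℝ) ^ s := Real.rpow_pos_of_pos (by linarith) s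
      apply one_div_le_one_div_of_le hsp
      rw [← h2]; exact h1
    exact (hinf.mono hsub) hs.2
  have hμ2 : (2 : ℝ) ≤ μ := hμ.2 hlb
  constructor
  · -- part (a)
    intro r hr
    have hr1 : (1 : ℝ) < r := by linarith
    have hex : ∃ s ∈ S, s < r := by
      by_contra h
      push_neg at h
      exact absurd (hμ.2 h) (not_le.mpr hr)
    obtain ⟨s, hsS, hsr⟩ := hex
    have hs2 : (2 : ℝ) ≤ s := hlb s hsS
    obtain ⟨hs0, hsfin⟩ := hsS
    -- exceptional constant
    set F : Finset ℝ := insert (1 : ℝ) (hsfin.toFinset.image fun q : ℚ => |α - (q : ℝ)|) with hF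
    have hFne : F.Nonempty := ⟨1, Finset.mem_insert_self _ _⟩
    set K : ℝ := F.min' hFne with hKdef
    have hK0 : 0 < K := by
      rw [hKdef]
      rw [Finset.lt_min'_iff]
      intro y hy
      rcases Finset.mem_insert.1 hy with h | h
      · rw [h]; norm_num
      · obtain ⟨q, hq, rfl⟩ := Finset.mem_image.1 h
        exact (hsfin.mem_toFinset.1 hq).1
    have hK1 : K ≤ 1 := Finset.min'_le _ _ (Finset.mem_insert_self _ _)
    have hKE : ∀ q : ℚ, q ∈ {q : ℚ | 0 < |α - (q : ℝ)| ∧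
        |α - (q : ℝ)| < 1 / (q.den : ℝ) ^ s} → K ≤ |α - (q : ℝ)| := by
      intro q hq
      apply Finset.min'_le
      exact Finset.mem_insert_of_mem (Finset.mem_image.2 ⟨q, hsfin.mem_toFinset.2 hq, rfl⟩)
    refine ⟨K, hK0, ?_⟩
    intro ξ₁ ξ₂ hne
    have hb1 : (1 : ℝ) ≤ ((|ξ₁| + |ξ₂| : ℤ) : ℝ) := by
      have : (1 : ℤ) ≤ |ξ₁| + |ξ₂| := by
        rcases not_and_or.1 hne with h | h
        · have := Int.one_le_abs h
          have := abs_nonneg ξ₂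
          linarith
        · have := Int.one_le_abs h
          have := abs_nonneg ξ₁
          linarith
      exact_mod_cast this
    have hbpow : ((|ξ₁| + |ξ₂| : ℤ) : ℝ) ^ ((1 : ℝ) - r) ≤ 1 :=
      Real.rpow_le_one_of_one_le_of_nonpos hb1 (by linarith)
    have hbpow0 : (0 : ℝ) ≤ ((|ξ₁| + |ξ₂| : ℤ) : ℝ) ^ ((1 : ℝ) - r) :=
      Real.rpow_nonneg (by linarith) _
    rcases eq_or_ne ξ₂ 0 with h2 | h2
    · subst h2
      have h1 : ξ₁ ≠ 0 := fun h => hne ⟨h, rfl⟩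
      have h1' : (1 : ℝ) ≤ |(ξ₁ : ℝ)| := by
        have := Int.one_le_abs h1
        calc (1 : ℝ) ≤ ((|ξ₁| : ℤ) : ℝ) := by exact_mod_cast this
          _ = |(ξ₁ : ℝ)| := by push_cast; ring
      have : |(ξ₁ : ℝ) - α * ((0 : ℤ) : ℝ)| = |(ξ₁ : ℝ)| := by norm_num
      rw [this]
      calc K * ((|ξ₁| + |(0:ℤ)| : ℤ) : ℝ) ^ ((1 : ℝ) - r) ≤ 1 * 1 := by
            exact mul_le_mul hK1 hbpow hbpow0 zero_le_one
        _ = 1 := by norm_num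
        _ ≤ |(ξ₁ : ℝ)| := h1'
    · set q : ℚ := (ξ₁ : ℚ) / (ξ₂ : ℚ) with hqdef
      have h2' : (ξ₂ : ℝ) ≠ 0 := Int.cast_ne_zero.mpr h2
      have hq : (q : ℝ) = (ξ₁ : ℝ) / (ξ₂ : ℝ) := by rw [hqdef]; push_cast; ring
      have key : |(ξ₁ : ℝ) - α * (ξ₂ : ℝ)| = |(ξ₂ : ℝ)| * |α - (q : ℝ)| := by
        have e : (ξ₁ : ℝ) - α * (ξ₂ : ℝ) = (ξ₂ : ℝ) * ((ξ₁ : ℝ) / (ξ₂ : ℝ) - α) := by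
          field_simp
        rw [e, abs_mul, ← hq, abs_sub_comm]
      have hdvd : ((q.den : ℤ)) ∣ ξ₂ := by
        rw [hqdef, ← Rat.divInt_eq_div]
        exact Rat.den_dvd ξ₁ ξ₂
      have hden : (q.den : ℝ) ≤ |(ξ₂ : ℝ)| := by
        have : (q.den : ℤ) ≤ |ξ₂| := Int.le_of_dvd (abs_pos.mpr h2) ((dvd_abs _ _).mpr hdvd)
        calc (q.den : ℝ) = (((q.den : ℤ)) : ℝ) := by push_cast; ring
          _ ≤ ((|ξ₂| : ℤ) : ℝ) := by exact_mod_cast this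
          _ = |(ξ₂ : ℝ)| := by push_cast; ring
      have habs2 : (1 : ℝ) ≤ |(ξ₂ : ℝ)| := by
        have := Int.one_le_abs h2
        calc (1 : ℝ) ≤ ((|ξ₂| : ℤ) : ℝ) := by exact_mod_cast this
          _ = |(ξ₂ : ℝ)| := by push_cast; ring
      by_cases hqE : q ∈ {q : ℚ | 0 < |α - (q : ℝ)| ∧ |α - (q : ℝ)| < 1 / (q.den : ℝ) ^ s}
      · have h1 : K ≤ |α - (q : ℝ)| := hKE q hqE
        rw [key]
        calc K * ((|ξ₁| + |ξ₂| : ℤ) : ℝ) ^ ((1 : ℝ) - r) ≤ K * 1 :=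
              mul_le_mul_of_nonneg_left hbpow hK0.le
          _ = K := mul_one K
          _ ≤ |α - (q : ℝ)| := h1
          _ = 1 * |α - (q : ℝ)| := (one_mul _).symm
          _ ≤ |(ξ₂ : ℝ)| * |α - (q : ℝ)| :=
              mul_le_mul_of_nonneg_right habs2 (abs_nonneg _)
      · have hpos : 0 < |α - (q : ℝ)| := abs_pos.2 (sub_ne_zero.2 (hα.ne_rat q))
        have hge : 1 / (q.den : ℝ) ^ s ≤ |α - (q : ℝ)| := by
          by_contra hcon
          push_neg at hcon
          exact hqE ⟨hpos, hcon⟩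
        have hd1 : (1 : ℝ) ≤ (q.den : ℝ) := by exact_mod_cast q.pos
        have hd0 : (0 : ℝ) < (q.den : ℝ) := by linarith
        have hxi0 : (0 : ℝ) < |(ξ₂ : ℝ)| := by linarith
        have hb2 : |(ξ₂ : ℝ)| ≤ ((|ξ₁| + |ξ₂| : ℤ) : ℝ) := by
          push_cast
          have := abs_nonneg (ξ₁ : ℝ)
          linarith
        have step1 : (q.den : ℝ) ^ s ≤ |(ξ₂ : ℝ)| ^ s :=
          Real.rpow_le_rpow hd0.le hden hs0.le
        have hds : (0 : ℝ) < (q.den : ℝ) ^ s := Real.rpow_pos_of_pos hd0 s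
        have step2 : 1 / |(ξ₂ : ℝ)| ^ s ≤ 1 / (q.den : ℝ) ^ s :=
          one_div_le_one_div_of_le hds step1
        have step3 : |(ξ₂ : ℝ)| ^ ((1 : ℝ) - s) ≤ |(ξ₂ : ℝ)| * |α - (q : ℝ)| := by
          rw [Real.rpow_sub hxi0, Real.rpow_one]
          calc |(ξ₂ : ℝ)| / |(ξ₂ : ℝ)| ^ s = |(ξ₂ : ℝ)| * (1 / |(ξ₂ : ℝ)| ^ s) := by ring
            _ ≤ |(ξ₂ : ℝ)| * (1 / (q.den : ℝ) ^ s) :=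
                mul_le_mul_of_nonneg_left step2 hxi0.le
            _ ≤ |(ξ₂ : ℝ)| * |α - (q : ℝ)| :=
                mul_le_mul_of_nonneg_left hge hxi0.le
        have step4 : ((|ξ₁| + |ξ₂| : ℤ) : ℝ) ^ ((1 : ℝ) - s) ≤ |(ξ₂ : ℝ)| ^ ((1 : ℝ) - s) :=
          Real.rpow_le_rpow_of_nonpos hxi0 hb2 (by linarith)
        have step5 : ((|ξ₁| + |ξ₂| : ℤ) : ℝ) ^ ((1 : ℝ) - r) ≤
            ((|ξ₁| + |ξ₂| : ℤ) : ℝ) ^ ((1 : ℝ) - s) :=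
          Real.rpow_le_rpow_of_exponent_le hb1 (by linarith)
        rw [key]
        calc K * ((|ξ₁| + |ξ₂| : ℤ) : ℝ) ^ ((1 : ℝ) - r)
            ≤ 1 * ((|ξ₁| + |ξ₂| : ℤ) : ℝ) ^ ((1 : ℝ) - r) :=
              mul_le_mul_of_nonneg_right hK1 hbpow0
          _ = ((|ξ₁| + |ξ₂| : ℤ) : ℝ) ^ ((1 : ℝ) - r) := one_mul _
          _ ≤ ((|ξ₁| + |ξ₂| : ℤ) : ℝ) ^ ((1 : ℝ) - s) := step5
          _ ≤ |(ξ₂ : ℝ)| ^ ((1 : ℝ) - s) := step4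
          _ ≤ |(ξ₂ : ℝ)| * |α - (q : ℝ)| := step3
  · -- part (b)
    rintro r hr0 hrμ ⟨K, hK, hbound⟩
    set s := (r + μ) / 2 with hsdef
    have hrs : r < s := by rw [hsdef]; linarith
    have hsμ : s < μ := by rw [hsdef]; linarith
    have hs0 : (0 : ℝ) < s := lt_of_le_of_lt hr0 hrs
    have hsS : s ∉ S := fun h => absurd (hμ.1 h) (not_le.mpr hsμ)
    have hinf : {q : ℚ | 0 < |α - (q : ℝ)| ∧
        |α - (q : ℝ)| < 1 / (q.den : ℝ) ^ s}.Infinite :=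
      fun hfin => hsS ⟨hs0, hfin⟩
    set c : ℝ := min 1 ((|α| + 2) ^ ((1 : ℝ) - r)) with hcdef
    have hα2 : (0 : ℝ) < |α| + 2 := by positivity
    have hc0 : 0 < c := lt_min one_pos (Real.rpow_pos_of_pos hα2 _)
    have hc1 : c ≤ 1 := min_le_left _ _
    set D : ℝ := (K * c)⁻¹ with hDdef
    have hD0 : 0 < D := by rw [hDdef]; positivity
    set Bb : ℝ := D ^ (s - r)⁻¹ with hBbdef
    have hBb0 : 0 < Bb := Real.rpow_pos_of_pos hD0 _
    have hsub : {q : ℚ | 0 < |α - (q : ℝ)| ∧ |α - (q : ℝ)| < 1 / (q.den : ℝ) ^ s} ⊆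
        {q : ℚ | (|(q.num : ℝ)|) ≤ (|α| + 1) * Bb ∧ (q.den : ℝ) ≤ Bb} := by
      rintro q ⟨h1, h2⟩
      set d : ℝ := (q.den : ℝ) with hddef
      have hd1 : (1 : ℝ) ≤ d := by rw [hddef]; exact_mod_cast q.pos
      have hd0 : (0 : ℝ) < d := by linarith
      have hds1 : (1 : ℝ) ≤ d ^ s := Real.one_le_rpow hd1 hs0.le
      have hq1 : |α - (q : ℝ)| < 1 := by
        apply h2.trans_le
        rw [div_le_one (by linarith)]
        exact hds1
      have hqabs : |(q : ℝ)| ≤ |α| + 1 := by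
        have h := abs_sub_abs_le_abs_sub (q : ℝ) α
        rw [abs_sub_comm] at h
        linarith
      have hnumeq : (q.num : ℝ) = (q : ℝ) * d := by
        rw [hddef, Rat.cast_def]
        field_simp
      have hnum : |(q.num : ℝ)| ≤ (|α| + 1) * d := by
        rw [hnumeq, abs_mul, abs_of_pos hd0]
        exact mul_le_mul_of_nonneg_right hqabs hd0.le
      -- apply the assumed bound at (q.num, q.den)
      have hne : ¬(q.num = 0 ∧ (q.den : ℤ) = 0) := by
        rintro ⟨-, h⟩
        exact q.pos.ne' (by exact_mod_cast h)
      have hb := hbound q.num (q.den : ℤ) hne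
      have hcast : ((|q.num| + |(q.den : ℤ)| : ℤ) : ℝ) = |(q.num : ℝ)| + d := by
        rw [hddef, Nat.abs_cast]
        push_cast
        ring
      have hrhs : |(q.num : ℝ)| - 0 ≤ 0 ∨ True := Or.inr trivial
      have hRHS : |(q.num : ℝ) - α * ((q.den : ℤ) : ℝ)| = d * |α - (q : ℝ)| := by
        rw [abs_sub_comm, ← abs_of_pos hd0, ← abs_mul]
        congr 1
        push_cast
        rw [hnumeq]
        ring
      rw [hcast, hRHS] at hb
      set b : ℝ := |(q.num : ℝ)| + d with hbdef
      have hbd : d ≤ b := by rw [hbdef]; have := abs_nonneg (q.num : ℝ); linarith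
      have hble : b ≤ (|α| + 2) * d := by rw [hbdef]; nlinarith
      have hb0 : (0 : ℝ) < b := lt_of_lt_of_le hd0 hbd
      have hbc : c * d ^ ((1 : ℝ) - r) ≤ b ^ ((1 : ℝ) - r) := by
        rcases le_or_gt 0 ((1 : ℝ) - r) with hpos | hneg
        · calc c * d ^ ((1 : ℝ) - r) ≤ 1 * d ^ ((1 : ℝ) - r) :=
                mul_le_mul_of_nonneg_right hc1 (Real.rpow_nonneg hd0.le _)
            _ = d ^ ((1 : ℝ) - r) := one_mul _
            _ ≤ b ^ ((1 : ℝ) - r) := Real.rpow_le_rpow hd0.le hbd hpos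
        · calc c * d ^ ((1 : ℝ) - r)
              ≤ (|α| + 2) ^ ((1 : ℝ) - r) * d ^ ((1 : ℝ) - r) :=
                mul_le_mul_of_nonneg_right (min_le_right _ _) (Real.rpow_nonneg hd0.le _)
            _ = ((|α| + 2) * d) ^ ((1 : ℝ) - r) := (Real.mul_rpow hα2.le hd0.le).symm
            _ ≤ b ^ ((1 : ℝ) - r) := Real.rpow_le_rpow_of_nonpos hb0 hble hneg.le
      have hchain : K * c * d ^ ((1 : ℝ) - r) < d ^ ((1 : ℝ) - s) := by
        have e1 : K * (c * d ^ ((1 : ℝ) - r)) ≤ K * (b ^ ((1 : ℝ) - r)) :=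
          mul_le_mul_of_nonneg_left hbc hK.le
        have e2 : d * |α - (q : ℝ)| < d * (1 / d ^ s) :=
          mul_lt_mul_of_pos_left h2 hd0
        have e3 : d * (1 / d ^ s) = d ^ ((1 : ℝ) - s) := by
          rw [Real.rpow_sub hd0, Real.rpow_one]
          ring
        calc K * c * d ^ ((1 : ℝ) - r) = K * (c * d ^ ((1 : ℝ) - r)) := by ring
          _ ≤ K * b ^ ((1 : ℝ) - r) := e1
          _ ≤ d * |α - (q : ℝ)| := hb
          _ < d * (1 / d ^ s) := e2
          _ = d ^ ((1 : ℝ) - s) := e3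
      have hsplit : d ^ ((1 : ℝ) - s) = d ^ ((1 : ℝ) - r) * d ^ (r - s) := by
        rw [← Real.rpow_add hd0]
        ring_nf
      have hKc : K * c < d ^ (r - s) := by
        rw [hsplit] at hchain
        have hdr0 : (0 : ℝ) < d ^ ((1 : ℝ) - r) := Real.rpow_pos_of_pos hd0 _
        have := (mul_lt_mul_iff_of_pos_right hdr0).mp (by linarith [hchain] :
          (K * c) * d ^ ((1 : ℝ) - r) < d ^ (r - s) * d ^ ((1 : ℝ) - r))
        exact this
      have hdsr : d ^ (s - r) < D := by
        have hinv : d ^ (s - r) = (d ^ (r - s))⁻¹ := by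
          rw [← Real.rpow_neg hd0.le]
          ring_nf
        rw [hinv, hDdef]
        have h1' : 0 < K * c := by positivity
        exact inv_strictAnti₀ h1' hKc
      have hdBb : d ≤ Bb := by
        have hne0 : s - r ≠ 0 := sub_ne_zero.mpr (ne_of_gt hrs)
        have hinv0 : (0:ℝ) ≤ (s - r)⁻¹ := inv_nonneg.mpr (by linarith : (0:ℝ) ≤ s - r)
        have := Real.rpow_le_rpow (Real.rpow_nonneg hd0.le (s - r)) hdsr.le hinv0
        rwa [Real.rpow_rpow_inv hd0.le hne0, ← hBbdef] at this
      constructor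
      · calc |(q.num : ℝ)| ≤ (|α| + 1) * d := hnum
          _ ≤ (|α| + 1) * Bb := by
              apply mul_le_mul_of_nonneg_left hdBb
              positivity
      · exact hdBb
    exact hinf ((aux_finite_rat ((|α| + 1) * Bb) Bb).subset hsub)
end
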